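/- Let k ≥ 2 be an integer and consider the asymmetric grid instance (V_k, c_k, p_k). For every A ⊆ V_k with |A| ≥ 2, TSP(A, c_k) = k · max{|A ∩ C_j| : j = 1,…,k}; moreover, for every A ⊆ V_k, TSP(A, c_k) ≤ k · max{|A ∩ C_j| : j = 1,…,k}. -/

import Mathlib

noncomputable section

/-- The cost of a tour given as a cyclic list: the sum of `c` over consecutive pairs
(cyclically). -/
def cycCost {V : Type*} (c : V → V → ℝ) (l : List V) : ℝ :=
  (List.zipWith c l (l.rotate 1)).sum

/-- `l` is a tour on the finite set `A`: a cyclic ordering of `A`, visiting each element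
exactly once. -/
def IsTour {V : Type*} [DecidableEq V] (A : Finset V) (l : List V) : Prop :=
  l.Nodup ∧ l.toFinset = A

/-- The minimum cost of a tour on `A` with respect to `c`. -/
def TSP {V : Type*} [DecidableEq V] (c : V → V → ℝ) (A : Finset V) : ℝ :=
  sInf {x : ℝ | ∃ l : List V, IsTour A l ∧ x = cycCost c l}

/-- The cost function of the asymmetric grid instance on `Fin k × Fin k` (first coordinate:
row, second coordinate: column): the shortest-path metric of the digraph with a unit-cost
edge from every vertex of column `j` to every vertex of column `j+1` (cyclically). -/
def gridCost (k : ℕ) (u w : Fin k × Fin k) : ℝ :=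
  if u = w then 0
  else if u.2 = w.2 then (k : ℝ)
  else (((w.2.val + k - u.2.val) % k : ℕ) : ℝ)

/-- Column `j` of the asymmetric grid instance. -/
def gridColumn (k : ℕ) (j : Fin k) : Finset (Fin k × Fin k) :=
  Finset.univ.filter (fun v => v.2 = j)

namespace GridAux

def natCost (k : ℕ) (u w : Fin k × Fin k) : ℕ :=
  if u = w then 0 else if u.2 = w.2 then k else (w.2.val + k - u.2.val) % k

def psi (k : ℕ) (j : Fin k) (u : Fin k × Fin k) : ℕ := (u.2.val + k - j.val) % k

def pcost (k : ℕ) (q : List (Fin k × Fin k)) : ℕ :=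
  (List.zipWith (natCost k) q q.tail).sum

lemma dvd_eq_k {k x : ℕ} (h : k ∣ x) (h1 : 0 < x) (h2 : x < 2 * k) : x = k := by
  obtain ⟨c, rfl⟩ := h
  match c with
  | 0 => omega
  | 1 => omega
  | (c + 2) =>
    exfalso
    have : k * 2 ≤ k * (c + 2) := Nat.mul_le_mul_left k (by omega)
    omega

lemma mod_eq_self' {k x r : ℕ} (h : x % k = r) (h2 : x < k + r) : x = r := by
  have hd := Nat.div_add_mod x k
  rcases Nat.eq_zero_or_pos (x / k) with h0 | h0
  · rw [h0, Nat.mul_zero, zero_add] at hd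
    omega
  · exfalso
    have h1 : k * 1 ≤ k * (x / k) := Nat.mul_le_mul_left k h0
    rw [Nat.mul_one] at h1
    omega

lemma psi_lt {k : ℕ} (hk : 0 < k) (j : Fin k) (u : Fin k × Fin k) : psi k j u < k :=
  Nat.mod_lt _ hk

lemma psi_eq_zero {k : ℕ} (j : Fin k) (u : Fin k × Fin k) (h : u.2 = j) : psi k j u = 0 := by
  unfold psi
  rw [h]
  have hj : j.val < k := j.isLt
  have : j.val + k - j.val = k := by omega
  rw [this, Nat.mod_self]

lemma col_eq_of_psi_eq_zero {k : ℕ} (j : Fin k) (u : Fin k × Fin k) (h : psi k j u = 0) :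
    u.2 = j := by
  unfold psi at h
  have ha : u.2.val < k := u.2.isLt
  have hj : j.val < k := j.isLt
  have hd : k ∣ (u.2.val + k - j.val) := Nat.dvd_of_mod_eq_zero h
  have := dvd_eq_k hd (by omega) (by omega)
  exact Fin.ext (by omega)

lemma natCost_pos {k : ℕ} (hk : 0 < k) {u w : Fin k × Fin k} (h : u ≠ w) :
    0 < natCost k u w := by
  unfold natCost
  rw [if_neg h]
  by_cases hc : u.2 = w.2
  · rw [if_pos hc]; exact hk
  · rw [if_neg hc]
    have ha : u.2.val < k := u.2.isLt
    have hb : w.2.val < k := w.2.isLt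
    have hab : u.2.val ≠ w.2.val := fun e => hc (Fin.ext e)
    rcases Nat.eq_zero_or_pos ((w.2.val + k - u.2.val) % k) with h0 | h0
    · exfalso
      have hd : k ∣ (w.2.val + k - u.2.val) := Nat.dvd_of_mod_eq_zero h0
      have := dvd_eq_k hd (by omega) (by omega)
      omega
    · exact h0

lemma natCost_lt {k : ℕ} (hk : 0 < k) {u w : Fin k × Fin k} (h : u.2 ≠ w.2) :
    natCost k u w < k := by
  unfold natCost
  rw [if_neg (fun e => h (congrArg Prod.snd e)), if_neg h]
  exact Nat.mod_lt _ hk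

lemma step_mod {k : ℕ} (j : Fin k) {u w : Fin k × Fin k} (h : u ≠ w) :
    (natCost k u w + psi k j u) % k = psi k j w := by
  have ha : u.2.val < k := u.2.isLt
  have hb : w.2.val < k := w.2.isLt
  have hj : j.val < k := j.isLt
  unfold natCost psi
  rw [if_neg h]
  by_cases hc : u.2 = w.2
  · rw [if_pos hc, hc, Nat.add_mod_left]
    exact Nat.mod_mod_of_dvd _ dvd_rfl
  · rw [if_neg hc]
    have e1 : ((w.2.val + k - u.2.val) % k + (u.2.val + k - j.val) % k) % k
        = ((w.2.val + k - u.2.val) + (u.2.val + k - j.val)) % k :=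
      (Nat.mod_modEq _ k).add (Nat.mod_modEq _ k)
    have e2 : (w.2.val + k - u.2.val) + (u.2.val + k - j.val) = (w.2.val + k - j.val) + k := by
      omega
    rw [e1, e2, Nat.add_mod_right]

lemma step_le {k : ℕ} (hk : 0 < k) (j : Fin k) {u w : Fin k × Fin k} (h : u ≠ w) :
    psi k j w + (if w.2 = j then k else 0) ≤ natCost k u w + psi k j u := by
  have hm := step_mod j h
  by_cases hw : w.2 = j
  · rw [if_pos hw]
    rw [psi_eq_zero j w hw] at hm ⊢
    have hd : k ∣ natCost k u w + psi k j u := Nat.dvd_of_mod_eq_zero hm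
    have h1 := natCost_pos hk h
    have := Nat.le_of_dvd (by omega) hd
    omega
  · rw [if_neg hw, add_zero, ← hm]
    exact Nat.mod_le _ _

lemma step_eq {k : ℕ} (hk : 0 < k) (j : Fin k) {u w : Fin k × Fin k} (h : u ≠ w)
    (hcond : w.2 = j ∨ psi k j u < psi k j w) :
    natCost k u w + psi k j u = psi k j w + (if w.2 = j then k else 0) := by
  have hm := step_mod j h
  by_cases hw : w.2 = j
  · rw [if_pos hw, psi_eq_zero j w hw, zero_add]
    rw [psi_eq_zero j w hw] at hm
    have hd : k ∣ natCost k u w + psi k j u := Nat.dvd_of_mod_eq_zero hm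
    have h1 := natCost_pos hk h
    have h2 : psi k j u < k := psi_lt hk j u
    have h3 : natCost k u w ≤ k := by
      by_cases hc : u.2 = w.2
      · unfold natCost; rw [if_neg h, if_pos hc]
      · exact le_of_lt (natCost_lt hk hc)
    exact dvd_eq_k hd (by omega) (by omega)
  · rw [if_neg hw, add_zero]
    rcases hcond with hc | hc
    · exact absurd hc hw
    have hcol : u.2 ≠ w.2 := by
      intro e
      have : psi k j u = psi k j w := by unfold psi; rw [e]
      omega
    have h3 : natCost k u w < k := natCost_lt hk hcol
    exact mod_eq_self' hm (by omega)

lemma pcost_cons_cons {k : ℕ} (u w : Fin k × Fin k) (r : List (Fin k × Fin k)) :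
    pcost k (u :: w :: r) = natCost k u w + pcost k (w :: r) := rfl

lemma path_le {k : ℕ} (hk : 0 < k) (j : Fin k) :
    ∀ (rest : List (Fin k × Fin k)) (u : Fin k × Fin k),
      List.Chain' (· ≠ ·) (u :: rest) →
      k * rest.countP (fun w => decide (w.2 = j)) +
          psi k j ((u :: rest).getLast (List.cons_ne_nil u rest))
        ≤ pcost k (u :: rest) + psi k j u := by
  intro rest
  induction rest with
  | nil => intro u _; simp [pcost]
  | cons w r ih =>
    intro u hch
    simp only [List.Chain'] at hch
    rw [List.isChain_cons_cons] at hch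
    have h1 := ih w hch.2
    have h2 := step_le hk j hch.1
    have h3 : k * List.countP (fun w => decide (w.2 = j)) (w :: r)
        = k * List.countP (fun w => decide (w.2 = j)) r + (if w.2 = j then k else 0) := by
      rw [List.countP_cons]
      by_cases hw : w.2 = j <;> simp [hw, Nat.mul_add]
    rw [List.getLast_cons (List.cons_ne_nil w r), pcost_cons_cons, h3]
    omega

lemma path_eq {k : ℕ} (hk : 0 < k) (j : Fin k) :
    ∀ (rest : List (Fin k × Fin k)) (u : Fin k × Fin k),
      List.Chain' (fun a b => a ≠ b ∧ (b.2 = j ∨ psi k j a < psi k j b)) (u :: rest) →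
      pcost k (u :: rest) + psi k j u =
        psi k j ((u :: rest).getLast (List.cons_ne_nil u rest)) +
          k * rest.countP (fun w => decide (w.2 = j)) := by
  intro rest
  induction rest with
  | nil => intro u _; simp [pcost]
  | cons w r ih =>
    intro u hch
    simp only [List.Chain'] at hch
    rw [List.isChain_cons_cons] at hch
    have h1 := ih w hch.2
    have h2 := step_eq hk j hch.1.1 hch.1.2
    have h3 : k * List.countP (fun w => decide (w.2 = j)) (w :: r)
        = k * List.countP (fun w => decide (w.2 = j)) r + (if w.2 = j then k else 0) := by
      rw [List.countP_cons]
      by_cases hw : w.2 = j <;> simp [hw, Nat.mul_add]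
    rw [List.getLast_cons (List.cons_ne_nil w r), pcost_cons_cons, h3]
    omega

lemma zipWith_snoc {α β : Type*} (f : α → α → β) :
    ∀ (t : List α) (a b : α),
      List.zipWith f (a :: (t ++ [b])) (t ++ [b]) = List.zipWith f (a :: t) (t ++ [b])
  | [], a, b => rfl
  | c :: t, a, b => by
    have ih := zipWith_snoc f t c b
    simp only [List.cons_append, List.zipWith_cons_cons]
    rw [ih]

lemma gridCost_eq_natCost (k : ℕ) (u w : Fin k × Fin k) :
    gridCost k u w = ((natCost k u w : ℕ) : ℝ) := by
  unfold gridCost natCost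
  by_cases h1 : u = w
  · simp [h1]
  · by_cases h2 : u.2 = w.2 <;> simp [h1, h2]

lemma cycCost_eq_pcost {k : ℕ} (a : Fin k × Fin k) (t : List (Fin k × Fin k)) :
    cycCost (gridCost k) (a :: t) = (pcost k ((a :: t) ++ [a]) : ℝ) := by
  have hg : gridCost k = fun u w => ((natCost k u w : ℕ) : ℝ) := by
    funext u w; exact gridCost_eq_natCost k u w
  unfold cycCost pcost
  rw [show (1 : ℕ) = 0 + 1 from rfl, List.rotate_cons_succ, List.rotate_zero]
  rw [List.cons_append, List.tail_cons, zipWith_snoc]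
  rw [hg, Nat.cast_list_sum, List.map_zipWith]

lemma cycCost_nonneg {k : ℕ} (l : List (Fin k × Fin k)) :
    0 ≤ cycCost (gridCost k) l := by
  cases l with
  | nil => simp [cycCost]
  | cons a t =>
    rw [cycCost_eq_pcost]
    positivity

lemma inter_col (k : ℕ) (A : Finset (Fin k × Fin k)) (j : Fin k) :
    A ∩ gridColumn k j = A.filter (fun v => v.2 = j) := by
  ext v
  simp [gridColumn, Finset.mem_filter, Finset.mem_inter]

lemma countP_col {k : ℕ} (j : Fin k) (A : Finset (Fin k × Fin k))
    (l : List (Fin k × Fin k)) (hn : l.Nodup) (ht : l.toFinset = A) :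
    l.countP (fun w => decide (w.2 = j)) = (A ∩ gridColumn k j).card := by
  rw [inter_col, ← ht, List.countP_eq_length_filter,
    ← List.toFinset_card_of_nodup (hn.filter _), List.toFinset_filter]
  congr 1
  ext v
  simp

lemma tour_lower {k : ℕ} (hk : 2 ≤ k) (j : Fin k) (A : Finset (Fin k × Fin k))
    (hA : 2 ≤ A.card) (l : List (Fin k × Fin k)) (hl : IsTour A l) :
    (k : ℝ) * ((A ∩ gridColumn k j).card : ℝ) ≤ cycCost (gridCost k) l := by
  have hk0 : 0 < k := by omega
  obtain ⟨hnd, hts⟩ := hl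
  have hlen : 2 ≤ l.length := by
    rw [← hts, List.toFinset_card_of_nodup hnd] at hA
    exact hA
  match l, hlen, hnd, hts with
  | a :: t, hlen2, hnd, hts =>
    have ht0 : t ≠ [] := by
      intro h; subst h; simp at hlen2
    have hch1 : List.Chain' (· ≠ ·) (a :: t) := List.Pairwise.isChain hnd
    have hlast : (a :: t).getLast (List.cons_ne_nil a t) ≠ a := by
      rw [List.getLast_cons ht0]
      intro e
      exact (List.nodup_cons.1 hnd).1 (e ▸ List.getLast_mem ht0)
    have hch : List.Chain' (· ≠ ·) ((a :: t) ++ [a]) := by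
      simp only [List.Chain']
      rw [List.isChain_append]
      refine ⟨hch1, List.isChain_singleton a, ?_⟩
      intro x hx y hy
      rw [List.getLast?_eq_getLast (List.cons_ne_nil a t), Option.mem_some_iff] at hx
      simp only [List.head?_cons, Option.mem_some_iff] at hy
      subst hx; subst hy
      exact hlast
    have hpl := path_le hk0 j (t ++ [a]) a (by simpa using hch)
    have hglast : ((a :: (t ++ [a])).getLast (List.cons_ne_nil a (t ++ [a]))) = a := by
      have h1 : ((a :: (t ++ [a]))).getLast? = some a := by
        rw [show (a :: (t ++ [a])) = (a :: t) ++ [a] by simp]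
        exact List.getLast?_concat
      rw [List.getLast?_eq_getLast (List.cons_ne_nil _ _)] at h1
      exact Option.some_injective _ h1
    rw [hglast] at hpl
    have hcount : (t ++ [a]).countP (fun w => decide (w.2 = j))
        = (A ∩ gridColumn k j).card := by
      rw [← countP_col j A (a :: t) hnd hts]
      rw [List.countP_append, List.countP_cons]
      simp [List.countP_cons]
    rw [hcount] at hpl
    rw [cycCost_eq_pcost]
    have : (k * (A ∩ gridColumn k j).card : ℕ) ≤ pcost k ((a :: t) ++ [a]) := by
      simp only [List.cons_append]
      omega
    calc (k : ℝ) * ((A ∩ gridColumn k j).card : ℝ)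
        = ((k * (A ∩ gridColumn k j).card : ℕ) : ℝ) := by push_cast; ring
      _ ≤ _ := Nat.cast_le.2 this
lemma colIdx_psi {k : ℕ} (hk0 : 0 < k) (j : Fin k) (t : ℕ) (ht : t < k) :
    ((j.val + t) % k + k - j.val) % k = t := by
  have hj : j.val < k := j.isLt
  have h1 : ((j.val + t) % k + (k - j.val)) % k = ((j.val + t) + (k - j.val)) % k :=
    (Nat.mod_modEq _ k).add_right _
  have h2 : (j.val + t) + (k - j.val) = t + k := by omega
  have h3 : (j.val + t) % k + k - j.val = (j.val + t) % k + (k - j.val) := by omega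
  rw [h3, h1, h2, Nat.add_mod_right, Nat.mod_eq_of_lt ht]

lemma colIdx_inv {k : ℕ} (hk0 : 0 < k) (j : Fin k) (b : ℕ) (hb : b < k) :
    (j.val + (b + k - j.val) % k) % k = b := by
  have hj : j.val < k := j.isLt
  have h1 : (j.val + (b + k - j.val) % k) % k = (j.val + (b + k - j.val)) % k :=
    (Nat.mod_modEq _ k).add_left _
  have h2 : j.val + (b + k - j.val) = b + k := by omega
  rw [h1, h2, Nat.add_mod_right, Nat.mod_eq_of_lt hb]

lemma tour_upper {k : ℕ} (hk : 2 ≤ k) (j : Fin k) (A : Finset (Fin k × Fin k))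
    (hA : 2 ≤ A.card)
    (hmax : ∀ j' : Fin k, (A ∩ gridColumn k j').card ≤ (A ∩ gridColumn k j).card) :
    ∃ l, IsTour A l ∧
      cycCost (gridCost k) l = (k : ℝ) * ((A ∩ gridColumn k j).card : ℝ) := by
  have hk0 : 0 < k := by omega
  obtain ⟨m, hmdef⟩ : ∃ m, (A ∩ gridColumn k j).card = m := ⟨_, rfl⟩
  set cols : Fin k → List (Fin k × Fin k) :=
    fun j' => (A.filter (fun v => v.2 = j')).toList with hcols
  have mem_cols : ∀ (j' : Fin k) (v : Fin k × Fin k), v ∈ cols j' ↔ v ∈ A ∧ v.2 = j' := by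
    intro j' v
    rw [hcols]
    simp [Finset.mem_filter]
  have nodup_cols : ∀ j', (cols j').Nodup := fun j' => Finset.nodup_toList _
  have len_cols : ∀ j', (cols j').length = (A ∩ gridColumn k j').card := by
    intro j'
    rw [inter_col, hcols]
    exact Finset.length_toList _
  have len_le : ∀ j', (cols j').length ≤ m := by
    intro j'
    rw [len_cols]
    exact hmdef ▸ hmax j'
  have len_colsj : (cols j).length = m := by rw [len_cols, hmdef]
  set colIdx : ℕ → Fin k := fun t => ⟨(j.val + t) % k, Nat.mod_lt _ hk0⟩ with hcolIdx
  set round : ℕ → List (Fin k × Fin k) :=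
    fun r => (List.range k).filterMap (fun t => (cols (colIdx t))[r]?) with hround
  set tour : List (Fin k × Fin k) := (List.range m).flatMap round with htour
  have psi_mem : ∀ t, t < k → ∀ v : Fin k × Fin k, v.2 = colIdx t → psi k j v = t := by
    intro t ht v hv
    unfold psi
    rw [hv, hcolIdx]
    exact colIdx_psi hk0 j t ht
  have hmemr : ∀ r (v : Fin k × Fin k), v ∈ round r ↔ (cols v.2)[r]? = some v := by
    intro r v
    rw [hround]
    constructor
    · intro h
      obtain ⟨t, _, hfv⟩ := List.mem_filterMap.1 h
      have hfv' : (cols (colIdx t))[r]? = some v := hfv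
      have hvmem : v ∈ cols (colIdx t) := by
        obtain ⟨hlt, he⟩ := List.getElem?_eq_some_iff.1 hfv'
        exact he ▸ List.getElem_mem hlt
      have hv2 : v.2 = colIdx t := ((mem_cols _ v).1 hvmem).2
      rw [hv2]
      exact hfv'
    · intro h
      apply List.mem_filterMap.2
      refine ⟨psi k j v, List.mem_range.2 (psi_lt hk0 j v), ?_⟩
      have hcv : colIdx (psi k j v) = v.2 := by
        rw [hcolIdx]
        apply Fin.ext
        show (j.val + (v.2.val + k - j.val) % k) % k = v.2.val
        exact colIdx_inv hk0 j v.2.val v.2.isLt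
      show (cols (colIdx (psi k j v)))[r]? = some v
      rw [hcv]
      exact h
  have hmemA : ∀ r (v : Fin k × Fin k), v ∈ round r → v ∈ A := by
    intro r v h
    have h1 := (hmemr r v).1 h
    obtain ⟨hlt, he⟩ := List.getElem?_eq_some_iff.1 h1
    exact ((mem_cols _ _).1 (he ▸ List.getElem_mem hlt)).1
  have hpsir : ∀ r (v : Fin k × Fin k), v ∈ round r → v.2 = j → psi k j v = 0 :=
    fun r v _ hv => psi_eq_zero j v hv
  have hpair : ∀ r, (round r).Pairwise (fun a b => psi k j a < psi k j b) := by
    intro r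
    have hpl : (List.range k).Pairwise (fun t t' => t < t' ∧ t < k ∧ t' < k) := by
      refine List.Pairwise.imp_of_mem ?_ (List.pairwise_lt_range (n := k))
      intro a b ha hb hab
      exact ⟨hab, List.mem_range.1 ha, List.mem_range.1 hb⟩
    rw [hround]
    refine List.Pairwise.filterMap _ ?_ hpl
    intro t t' htt' b hb b' hb'
    have hb1 : (cols (colIdx t))[r]? = some b := Option.mem_def.1 hb
    have hb1' : (cols (colIdx t'))[r]? = some b' := Option.mem_def.1 hb'
    have hcol : b.2 = colIdx t := by
      obtain ⟨hlt, he⟩ := List.getElem?_eq_some_iff.1 hb1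
      exact ((mem_cols _ _).1 (he ▸ List.getElem_mem hlt)).2
    have hcol' : b'.2 = colIdx t' := by
      obtain ⟨hlt, he⟩ := List.getElem?_eq_some_iff.1 hb1'
      exact ((mem_cols _ _).1 (he ▸ List.getElem_mem hlt)).2
    rw [psi_mem t htt'.2.1 b hcol, psi_mem t' htt'.2.2 b' hcol']
    exact htt'.1
  have hnodupr : ∀ r, (round r).Nodup := by
    intro r
    exact (hpair r).imp (fun {a b} h => by intro e; rw [e] at h; exact lt_irrefl _ h)
  have hdisj : ∀ r r', r ≠ r' → ∀ v, v ∈ round r → v ∈ round r' → False := by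
    intro r r' hne v h1 h2
    rw [hmemr] at h1 h2
    have hlt : r < (cols v.2).length := (List.getElem?_eq_some_iff.1 h1).1
    exact hne ((List.getElem?_inj hlt (nodup_cols v.2)).1 (h1.trans h2.symm))
  have hnodup : tour.Nodup := by
    rw [htour, List.nodup_flatMap]
    refine ⟨fun r _ => hnodupr r, ?_⟩
    refine List.Pairwise.imp_of_mem ?_ (List.pairwise_lt_range (n := m))
    intro r r' _ _ hlt v hv hv'
    exact hdisj r r' (Nat.ne_of_lt hlt) v hv hv'
  have htfin : tour.toFinset = A := by
    ext v
    rw [List.mem_toFinset, htour]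
    rw [List.mem_flatMap]
    constructor
    · rintro ⟨r, _, hv⟩
      exact hmemA r v hv
    · intro hv
      have hvc : v ∈ cols v.2 := (mem_cols v.2 v).2 ⟨hv, rfl⟩
      obtain ⟨n, hn, he⟩ := List.getElem_of_mem hvc
      refine ⟨n, List.mem_range.2 (lt_of_lt_of_le hn (len_le v.2)), ?_⟩
      rw [hmemr, List.getElem?_eq_getElem hn, he]
  have hlen_tour : tour.length = A.card := by
    rw [← htfin, List.toFinset_card_of_nodup hnodup]
  have hm1 : 1 ≤ m := by
    have hpos : 0 < A.card := by omega
    obtain ⟨v, hv⟩ := Finset.card_pos.1 hpos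
    have hvm : v ∈ A ∩ gridColumn k v.2 := by
      rw [inter_col]
      exact Finset.mem_filter.2 ⟨hv, rfl⟩
    calc 1 ≤ (A ∩ gridColumn k v.2).card := Finset.card_pos.2 ⟨v, hvm⟩
      _ ≤ m := hmdef ▸ hmax v.2
  -- the first element of each round
  have hround_cons : ∀ r, r < m → ∃ x s, (cols j)[r]? = some x ∧ round r = x :: s := by
    intro r hr
    have hrl : r < (cols j).length := by rw [len_colsj]; exact hr
    have hx : (cols j)[r]? = some ((cols j)[r]) := List.getElem?_eq_getElem hrl
    have h0 : colIdx 0 = j := by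
      rw [hcolIdx]
      apply Fin.ext
      show (j.val + 0) % k = j.val
      rw [Nat.add_zero, Nat.mod_eq_of_lt j.isLt]
    have hrange : List.range k = 0 :: List.map Nat.succ (List.range (k - 1)) := by
      conv_lhs => rw [show k = (k - 1) + 1 by omega]
      exact List.range_succ_eq_map (n := k - 1)
    have hf0 : (cols (colIdx 0))[r]? = some ((cols j)[r]) := by rw [h0]; exact hx
    refine ⟨(cols j)[r], (List.map Nat.succ (List.range (k - 1))).filterMap
      (fun t => (cols (colIdx t))[r]?), hx, ?_⟩
    rw [hround]
    show (List.range k).filterMap (fun t => (cols (colIdx t))[r]?) = _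
    rw [hrange]
    simp only [List.filterMap_cons, hf0]
  have hanchor2 : ∀ (x : Fin k × Fin k) (r : ℕ), (cols j)[r]? = some x → x.2 = j ∧ x ∈ A := by
    intro x r hx
    obtain ⟨hlt, he⟩ := List.getElem?_eq_some_iff.1 hx
    have := (mem_cols _ _).1 (he ▸ List.getElem_mem hlt)
    exact ⟨this.2, this.1⟩
  have hne_head : ∀ (z : Fin k × Fin k) (s : List (Fin k × Fin k)), (z :: s).Nodup → s ≠ [] →
      ∀ x ∈ (z :: s).getLast?, x ≠ z := by
    intro z s hnd hs x hx
    rw [List.getLast?_eq_getLast (List.cons_ne_nil z s), Option.mem_some_iff] at hx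
    subst hx
    rw [List.getLast_cons hs]
    intro e
    exact (List.nodup_cons.1 hnd).1 (e ▸ List.getLast_mem hs)
  -- the generic link property between rounds
  have hlink2 : ∀ r r', r < m → r' < m → (r ≠ r' ∨ 2 ≤ (round r).length) →
      ∀ x ∈ (round r).getLast?, ∀ y ∈ (round r').head?,
        x ≠ y ∧ (y.2 = j ∨ psi k j x < psi k j y) := by
    intro r r' hr hr' hor x hx y hy
    obtain ⟨ya, sa, hya, hcons⟩ := hround_cons r' hr'
    rw [hcons, List.head?_cons, Option.mem_some_iff] at hy
    subst hy
    have hy2 : ya.2 = j := (hanchor2 ya r' hya).1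
    have hxmem : x ∈ round r := by
      have hne : round r ≠ [] := by
        intro h
        rw [h] at hx
        simp at hx
      rw [List.getLast?_eq_getLast hne, Option.mem_some_iff] at hx
      subst hx
      exact List.getLast_mem hne
    have hymem : ya ∈ round r' := by
      rw [hcons]
      exact List.mem_cons_self
    refine ⟨?_, Or.inl hy2⟩
    by_cases hrr : r = r'
    · subst hrr
      rcases hor with hne | hlen2
      · exact absurd rfl hne
      · have hsne : sa ≠ [] := by
          intro h
          rw [hcons, h] at hlen2
          simp at hlen2
        have hnd : (ya :: sa).Nodup := hcons ▸ hnodupr r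
        have hx2 : x ∈ (ya :: sa).getLast? := by rw [← hcons]; exact hx
        exact hne_head ya sa hnd hsne x hx2
    · intro e
      exact hdisj r r' hrr x hxmem (e ▸ hymem)
  -- set up the closed walk
  obtain ⟨m', rfl⟩ : ∃ m', m = m' + 1 := ⟨m - 1, by omega⟩
  obtain ⟨a0, s0, ha0, hcons0⟩ := hround_cons 0 (by omega)
  have ha02 : a0.2 = j := (hanchor2 a0 0 ha0).1
  have htc : tour = a0 :: (s0 ++ (List.map Nat.succ (List.range m')).flatMap round) := by
    rw [htour, List.range_succ_eq_map, List.flatMap_cons, hcons0]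
    simp
  set rest : List (Fin k × Fin k) := s0 ++ (List.map Nat.succ (List.range m')).flatMap round
    with hrest
  -- the chain condition on tour ++ [a0]
  have hchain : List.Chain' (fun a b => a ≠ b ∧ (b.2 = j ∨ psi k j a < psi k j b))
      (tour ++ [a0]) := by
    have hLform : tour ++ [a0] = (((List.range (m' + 1)).map round) ++ [[a0]]).flatten := by
      rw [List.flatten_append, ← List.flatMap_def, htour]
      simp
    rw [hLform]
    have hnonnil : [] ∉ ((List.range (m' + 1)).map round) ++ [[a0]] := by
      intro h
      rcases List.mem_append.1 h with h | h
      · obtain ⟨r, hr, hre⟩ := List.mem_map.1 h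
        obtain ⟨x, s, _, hcons⟩ := hround_cons r (List.mem_range.1 hr)
        rw [hcons] at hre
        exact List.cons_ne_nil _ _ hre
      · simp at h
    simp only [List.Chain']
    rw [List.isChain_flatten hnonnil]
    constructor
    · intro l hl
      rcases List.mem_append.1 hl with h | h
      · obtain ⟨r, _, rfl⟩ := List.mem_map.1 h
        refine List.Pairwise.isChain ?_
        refine (hpair r).imp ?_
        intro a b hlt
        exact ⟨fun e => by rw [e] at hlt; exact lt_irrefl _ hlt, Or.inr hlt⟩
      · have : l = [a0] := by simpa using h
        rw [this]
        exact List.isChain_singleton _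
    · rw [List.isChain_append]
      refine ⟨?_, List.isChain_singleton _, ?_⟩
      · rw [List.isChain_map]
        rw [List.isChain_range_succ]
        intro r hr
        exact hlink2 r (r + 1) (by omega) (by omega) (Or.inl (by omega))
      · intro L hL y2 hy2
        have hLlast : round m' = L := by
          rw [List.getLast?_map] at hL
          rw [List.range_succ, List.getLast?_concat] at hL
          simpa using hL
        have hy2' : [a0] = y2 := by simpa using hy2
        subst hLlast
        subst hy2'
        intro x hx y hy
        have hy' : y ∈ (round 0).head? := by
          rw [hcons0, List.head?_cons]
          simpa using hy
        by_cases hm'0 : m' = 0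
        · subst hm'0
          refine hlink2 0 0 (by omega) (by omega) (Or.inr ?_) x hx y hy'
          have htr : tour = round 0 := by
            rw [htour, show List.range 1 = [0] from rfl]
            simp
          rw [← htr, hlen_tour]
          exact hA
        · exact hlink2 m' 0 (by omega) (by omega) (Or.inl hm'0) x hx y hy'
  -- compute the cost
  have hchain' : List.Chain' (fun a b => a ≠ b ∧ (b.2 = j ∨ psi k j a < psi k j b))
      (a0 :: (rest ++ [a0])) := by
    have h1 := hchain
    rw [htc] at h1
    simpa using h1
  have hpeq := path_eq hk0 j (rest ++ [a0]) a0 hchain'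
  have hpsia0 : psi k j a0 = 0 := psi_eq_zero j a0 ha02
  have hglast : ((a0 :: (rest ++ [a0])).getLast (List.cons_ne_nil a0 (rest ++ [a0]))) = a0 := by
    have h1 : ((a0 :: (rest ++ [a0]))).getLast? = some a0 := by
      rw [show (a0 :: (rest ++ [a0])) = (a0 :: rest) ++ [a0] by simp]
      exact List.getLast?_concat
    rw [List.getLast?_eq_getLast (List.cons_ne_nil _ _)] at h1
    exact Option.some_injective _ h1
  have hcountt : tour.countP (fun w => decide (w.2 = j)) = m' + 1 := by
    rw [countP_col j A tour hnodup htfin, hmdef]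
  have hcount : (rest ++ [a0]).countP (fun w => decide (w.2 = j)) = m' + 1 := by
    rw [htc, List.countP_cons] at hcountt
    rw [List.countP_append, List.countP_cons]
    simp [ha02] at hcountt ⊢
    omega
  rw [hglast, hpsia0, hcount, add_zero, zero_add] at hpeq
  refine ⟨tour, ⟨hnodup, htfin⟩, ?_⟩
  rw [htc, cycCost_eq_pcost]
  have hpc : pcost k ((a0 :: rest) ++ [a0]) = k * (m' + 1) := by
    rw [show (a0 :: rest) ++ [a0] = a0 :: (rest ++ [a0]) by simp]
    exact hpeq
  rw [hpc, hmdef]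
  push_cast
  ring
end GridAux


/-- for the asymmetric grid instance, `TSP(A, c_k) = k · max_j |A ∩ C_j|`
whenever `|A| ≥ 2`, and `TSP(A, c_k) ≤ k · max_j |A ∩ C_j|` for every `A`. -/
theorem statement2 (k : ℕ) (hk : 2 ≤ k) (A : Finset (Fin k × Fin k)) :
    (2 ≤ A.card →
      TSP (gridCost k) A =
        (k : ℝ) * ((Finset.univ.sup fun j : Fin k => (A ∩ gridColumn k j).card : ℕ) : ℝ)) ∧
    TSP (gridCost k) A ≤
      (k : ℝ) * ((Finset.univ.sup fun j : Fin k => (A ∩ gridColumn k j).card : ℕ) : ℝ) := by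
  classical
  have hk0 : 0 < k := by omega
  have hne : (Finset.univ : Finset (Fin k)).Nonempty := ⟨⟨0, hk0⟩, Finset.mem_univ _⟩
  obtain ⟨j, -, hj⟩ := Finset.exists_mem_eq_sup Finset.univ hne
    (fun j : Fin k => (A ∩ gridColumn k j).card)
  rw [hj]
  have hmax : ∀ j' : Fin k, (A ∩ gridColumn k j').card ≤ (A ∩ gridColumn k j).card := by
    intro j'
    rw [← hj]
    exact Finset.le_sup (f := fun j : Fin k => (A ∩ gridColumn k j).card) (Finset.mem_univ j')
  have hbdd : BddBelow {x : ℝ | ∃ l, IsTour A l ∧ x = cycCost (gridCost k) l} := by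
    refine ⟨0, ?_⟩
    rintro x ⟨l, _, rfl⟩
    exact GridAux.cycCost_nonneg l
  have hRHS : (0:ℝ) ≤ (k : ℝ) * ((A ∩ gridColumn k j).card : ℝ) := by positivity
  have heq : 2 ≤ A.card →
      TSP (gridCost k) A = (k : ℝ) * ((A ∩ gridColumn k j).card : ℝ) := by
    intro hA
    obtain ⟨l, hl, hc⟩ := GridAux.tour_upper hk j A hA hmax
    apply IsLeast.csInf_eq
    constructor
    · exact ⟨l, hl, hc.symm⟩
    · rintro x ⟨l', hl', rfl⟩
      exact GridAux.tour_lower hk j A hA l' hl'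
  refine ⟨heq, ?_⟩
  by_cases hA : 2 ≤ A.card
  · rw [heq hA]
  · have hle1 : A.card ≤ 1 := by omega
    have hex : ∃ l, IsTour A l ∧ cycCost (gridCost k) l = 0 := by
      rcases Finset.eq_empty_or_nonempty A with rfl | ⟨v, hv⟩
      · exact ⟨[], ⟨List.nodup_nil, by simp⟩, by simp [cycCost]⟩
      · have hAv : A = {v} := by
          apply Finset.eq_singleton_iff_unique_mem.2
          exact ⟨hv, fun w hw => Finset.card_le_one.1 hle1 w hw v hv⟩
        refine ⟨[v], ⟨List.nodup_singleton v, by simp [hAv]⟩, ?_⟩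
        have h1 : cycCost (gridCost k) [v] = gridCost k v v := by
          simp [cycCost, List.rotate_singleton]
        rw [h1]
        simp [gridCost]
    obtain ⟨l, hl, hc⟩ := hex
    calc TSP (gridCost k) A ≤ cycCost (gridCost k) l := csInf_le hbdd ⟨l, hl, rfl⟩
      _ = 0 := hc
      _ ≤ _ := hRHS

end
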